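/- If φ : π₁(Σ_g) → F_k is a surjective group homomorphism from the fundamental group of a closed orientable surface of genus g to a free group of rank k, then k ≤ g. -/

import Mathlib

open scoped commutatorElement in
/-- The canonical surface relator `[a₁,b₁]⋯[a_g,b_g]` in the free group on `2g` generators. -/
def surfaceRel (g : ℕ) : FreeGroup (Fin (2 * g)) :=
  (List.ofFn (fun i : Fin g =>
    ⁅FreeGroup.of (⟨2 * i, by omega⟩ : Fin (2 * g)),
     FreeGroup.of (⟨2 * i + 1, by omega⟩ : Fin (2 * g))⁆)).prod

/-- The fundamental group of the closed orientable surface of genus `g`. -/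
def SurfaceGroup (g : ℕ) : Type :=
  PresentedGroup ({surfaceRel g} : Set (FreeGroup (Fin (2 * g))))

instance (g : ℕ) : Group (SurfaceGroup g) := by unfold SurfaceGroup; infer_instance

namespace CorankAux

open Matrix Multiplicative

/-! ### vecMulVec helper lemmas -/

variable {N : ℕ}

lemma vmv_add_left (x y z : Fin N → ℤ) :
    vecMulVec (x + y) z = vecMulVec x z + vecMulVec y z := by
  ext i j; simp [vecMulVec_apply]; ring

lemma vmv_add_right (x y z : Fin N → ℤ) :
    vecMulVec x (y + z) = vecMulVec x y + vecMulVec x z := by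
  ext i j; simp [vecMulVec_apply]; ring

lemma vmv_zero_left (z : Fin N → ℤ) : vecMulVec (0 : Fin N → ℤ) z = 0 := by
  ext i j; simp [vecMulVec_apply]

lemma vmv_zero_right (z : Fin N → ℤ) : vecMulVec z (0 : Fin N → ℤ) = 0 := by
  ext i j; simp [vecMulVec_apply]

lemma vmv_transpose (x y : Fin N → ℤ) :
    (vecMulVec x y)ᵀ = vecMulVec y x := by
  ext i j; simp [vecMulVec_apply, transpose_apply]; ring

lemma vmv_mul_vmv (x y z w : Fin N → ℤ) :
    vecMulVec x y * vecMulVec z w = (y ⬝ᵥ z) • vecMulVec x w := by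
  ext i j
  simp only [mul_apply, vecMulVec_apply, Matrix.smul_apply, dotProduct, smul_eq_mul]
  rw [Finset.sum_mul]
  apply Finset.sum_congr rfl
  intros; ring

lemma conj_vmv {K : ℕ} (P : Matrix (Fin K) (Fin N) ℤ) (x y : Fin N → ℤ) :
    P * vecMulVec x y * Pᵀ = vecMulVec (P *ᵥ x) (P *ᵥ y) := by
  ext i j
  simp only [mul_apply, vecMulVec_apply, mulVec, dotProduct, transpose_apply]
  rw [Finset.sum_mul_sum]
  rw [Finset.sum_comm]
  apply Finset.sum_congr rfl
  intro b _
  rw [Finset.sum_mul]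
  apply Finset.sum_congr rfl
  intros; ring

/-! ### Abelianization of free groups -/

/-- The abelianization map of a free group, recording exponent vectors. -/
def abm (n : ℕ) : FreeGroup (Fin n) →* Multiplicative (Fin n → ℤ) :=
  FreeGroup.lift fun i => ofAdd (Pi.single i 1)

/-- Exponent vector of a word in a free group. -/
def ab {n : ℕ} (w : FreeGroup (Fin n)) : Fin n → ℤ := toAdd (abm n w)

lemma ab_of {n : ℕ} (i : Fin n) : ab (FreeGroup.of i) = Pi.single i 1 := by
  simp [ab, abm]

lemma ab_eq_mulVec {n m : ℕ} (f : FreeGroup (Fin n) →* FreeGroup (Fin m))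
    (C : Matrix (Fin m) (Fin n) ℤ)
    (hC : ∀ j, ab (f (FreeGroup.of j)) = C *ᵥ Pi.single j 1) (w : FreeGroup (Fin n)) :
    ab (f w) = C *ᵥ ab w := by
  have key : (abm m).comp f =
      (AddMonoidHom.toMultiplicative (C.mulVecLin.toAddMonoidHom)).comp (abm n) := by
    apply FreeGroup.ext_hom
    intro a
    have h1 : abm m (f (FreeGroup.of a)) = ofAdd (ab (f (FreeGroup.of a))) := rfl
    simp only [MonoidHom.comp_apply, h1, hC a]
    simp [abm, AddMonoidHom.toMultiplicative]
  have := congrArg (fun F : FreeGroup (Fin n) →* Multiplicative (Fin m → ℤ) => toAdd (F w)) key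
  simpa [ab, AddMonoidHom.toMultiplicative] using this

/-! ### A 2-step nilpotent "Heisenberg" group -/

/-- Heisenberg-type group recording abelianization and a 2-nilpotent correction matrix. -/
@[ext] structure Heis (g : ℕ) where
  v : Fin (2 * g) → ℤ
  m : Matrix (Fin (2 * g)) (Fin (2 * g)) ℤ

namespace Heis

variable {g : ℕ}

instance : Group (Heis g) where
  mul a b := ⟨a.v + b.v, a.m + b.m + vecMulVec a.v b.v⟩
  one := ⟨0, 0⟩
  inv a := ⟨-a.v, -a.m + vecMulVec a.v a.v⟩
  mul_assoc a b c := by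
    refine Heis.ext (show a.v + b.v + c.v = a.v + (b.v + c.v) by abel) ?_
    show a.m + b.m + vecMulVec a.v b.v + c.m + vecMulVec (a.v + b.v) c.v =
      a.m + (b.m + c.m + vecMulVec b.v c.v) + vecMulVec a.v (b.v + c.v)
    ext i j
    simp [vecMulVec_apply]
    ring
  one_mul a := by
    refine Heis.ext (show 0 + a.v = a.v by abel) ?_
    show 0 + a.m + vecMulVec 0 a.v = a.m
    simp [vmv_zero_left]
  mul_one a := by
    refine Heis.ext (show a.v + 0 = a.v by abel) ?_
    show a.m + 0 + vecMulVec a.v 0 = a.m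
    simp [vmv_zero_right]
  inv_mul_cancel a := by
    refine Heis.ext (show -a.v + a.v = 0 by abel) ?_
    show -a.m + vecMulVec a.v a.v + a.m + vecMulVec (-a.v) a.v = 0
    ext i j
    simp [vecMulVec_apply]

lemma mul_def (a b : Heis g) : a * b = ⟨a.v + b.v, a.m + b.m + vecMulVec a.v b.v⟩ := rfl

lemma one_def : (1 : Heis g) = ⟨0, 0⟩ := rfl

lemma inv_def (a : Heis g) : a⁻¹ = ⟨-a.v, -a.m + vecMulVec a.v a.v⟩ := rfl

open scoped commutatorElement in
lemma commutator_eq (a b : Heis g) :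
    ⁅a, b⁆ = ⟨0, vecMulVec a.v b.v - vecMulVec b.v a.v⟩ := by
  rw [commutatorElement_def]
  refine Heis.ext ?_ ?_
  · show a.v + b.v + -a.v + -b.v = 0
    abel
  · show a.m + b.m + vecMulVec a.v b.v + (-a.m + vecMulVec a.v a.v)
        + vecMulVec (a.v + b.v) (-a.v)
        + (-b.m + vecMulVec b.v b.v)
        + vecMulVec (a.v + b.v + -a.v) (-b.v)
      = vecMulVec a.v b.v - vecMulVec b.v a.v
    ext i j
    simp [vecMulVec_apply]
    ring

/-- The central homomorphism from matrices into `Heis g`. -/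
def zeta : Multiplicative (Matrix (Fin (2 * g)) (Fin (2 * g)) ℤ) →* Heis g where
  toFun ξ := ⟨0, toAdd ξ⟩
  map_one' := rfl
  map_mul' ξ η := by
    refine Heis.ext ?_ ?_
    · show (0 : Fin (2*g) → ℤ) = 0 + 0; simp
    · show toAdd (ξ * η) = toAdd ξ + toAdd η + vecMulVec 0 0
      simp [vmv_zero_left]

lemma prod_central_list (l : List (Matrix (Fin (2 * g)) (Fin (2 * g)) ℤ)) :
    (l.map (fun ξ => (⟨0, ξ⟩ : Heis g))).prod = ⟨0, l.sum⟩ := by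
  induction l with
  | nil => rfl
  | cons ξ l ih =>
    rw [List.map_cons, List.prod_cons, ih, List.sum_cons, mul_def]
    refine Heis.ext (by simp) ?_
    show ξ + l.sum + vecMulVec 0 0 = ξ + l.sum
    simp [vmv_zero_left]

end Heis

/-- The canonical homomorphism from the free group to the Heisenberg group. -/
def hh (g : ℕ) : FreeGroup (Fin (2 * g)) →* Heis g :=
  FreeGroup.lift fun i => ⟨Pi.single i 1, 0⟩

/-- The `v`-component projection as a homomorphism. -/
def fstHom (g : ℕ) : Heis g →* Multiplicative (Fin (2 * g) → ℤ) where
  toFun a := ofAdd a.v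
  map_one' := rfl
  map_mul' a b := rfl

lemma hh_v {g : ℕ} (w : FreeGroup (Fin (2 * g))) : (hh g w).v = ab w := by
  have key : (fstHom g).comp (hh g) = abm (2 * g) := by
    apply FreeGroup.ext_hom
    intro a
    simp [fstHom, hh, abm]
  have := congrArg (fun F : FreeGroup (Fin (2*g)) →* Multiplicative (Fin (2*g) → ℤ) =>
    toAdd (F w)) key
  simpa [fstHom, ab] using this

/-! ### The symplectic form -/

/-- first index of the `t`-th handle -/
def sg0 {g : ℕ} (t : Fin g) : Fin (2 * g) := ⟨2 * t, by omega⟩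

/-- second index of the `t`-th handle -/
def sg1 {g : ℕ} (t : Fin g) : Fin (2 * g) := ⟨2 * t + 1, by omega⟩

/-- The standard symplectic matrix. -/
def Om (g : ℕ) : Matrix (Fin (2 * g)) (Fin (2 * g)) ℤ :=
  ∑ t : Fin g, (vecMulVec (Pi.single (sg0 t) 1) (Pi.single (sg1 t) 1)
    - vecMulVec (Pi.single (sg1 t) 1) (Pi.single (sg0 t) 1))

lemma dps {g : ℕ} (a b : Fin (2 * g)) :
    (Pi.single a 1 : Fin (2*g) → ℤ) ⬝ᵥ Pi.single b 1 = if a = b then 1 else 0 := by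
  rw [dotProduct_single, mul_one, Pi.single_apply]
  exact if_congr eq_comm rfl rfl

/-- the pairing equiv -/
def pairEquiv (g : ℕ) : Fin g × Fin 2 ≃ Fin (2 * g) where
  toFun p := ⟨2 * p.1 + p.2, by omega⟩
  invFun i := (⟨i / 2, by omega⟩, ⟨i % 2, by omega⟩)
  left_inv p := by
    ext
    · show (2 * p.1 + p.2 : ℕ) / 2 = p.1
      omega
    · show (2 * p.1 + p.2 : ℕ) % 2 = p.2
      omega
  right_inv i := by
    apply Fin.ext
    show 2 * (i / 2) + i % 2 = (i : ℕ)
    omega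

lemma sum_single_outer {g : ℕ} :
    (∑ i : Fin (2 * g), vecMulVec (Pi.single i (1:ℤ)) (Pi.single i 1)) = 1 := by
  ext a b
  rw [Matrix.sum_apply]
  simp only [vecMulVec_apply, Pi.single_apply]
  rw [Finset.sum_eq_single a (fun i _ hi => by simp [Ne.symm hi]) (by simp)]
  simp [Matrix.one_apply, eq_comm]

lemma sum_pair {g : ℕ} (F : Fin (2*g) → Matrix (Fin (2*g)) (Fin (2*g)) ℤ) :
    ∑ t : Fin g, (F (sg0 t) + F (sg1 t)) = ∑ i : Fin (2*g), F i := by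
  rw [← Equiv.sum_comp (pairEquiv g) F, Fintype.sum_prod_type]
  apply Finset.sum_congr rfl
  intro t _
  rw [Fin.sum_univ_two]
  rfl

lemma Om_mul_Om {g : ℕ} : Om g * Om g = -1 := by
  have h01 : ∀ t u : Fin g, sg0 t ≠ sg1 u := fun t u => Fin.ne_of_val_ne (by simp [sg0, sg1]; omega)
  have h10 : ∀ t u : Fin g, sg1 t ≠ sg0 u := fun t u => Fin.ne_of_val_ne (by simp [sg0, sg1]; omega)
  have h00 : ∀ t u : Fin g, t ≠ u → sg0 t ≠ sg0 u := fun t u h =>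
    Fin.ne_of_val_ne (by have := Fin.val_ne_of_ne h; simp only [sg0]; omega)
  have h11 : ∀ t u : Fin g, t ≠ u → sg1 t ≠ sg1 u := fun t u h =>
    Fin.ne_of_val_ne (by have := Fin.val_ne_of_ne h; simp only [sg1]; omega)
  rw [Om, Finset.sum_mul_sum]
  have hterm : ∀ t : Fin g,
      (∑ u : Fin g, ((vecMulVec (Pi.single (sg0 t) 1) (Pi.single (sg1 t) 1)
          - vecMulVec (Pi.single (sg1 t) 1) (Pi.single (sg0 t) 1))
        * (vecMulVec (Pi.single (sg0 u) 1) (Pi.single (sg1 u) 1)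
          - vecMulVec (Pi.single (sg1 u) 1) (Pi.single (sg0 u) 1))))
      = -(vecMulVec (Pi.single (sg0 t) (1:ℤ)) (Pi.single (sg0 t) 1)
          + vecMulVec (Pi.single (sg1 t) 1) (Pi.single (sg1 t) 1)) := by
    intro t
    rw [Finset.sum_eq_single t ?_ (by simp)]
    · rw [sub_mul, mul_sub, mul_sub, vmv_mul_vmv, vmv_mul_vmv, vmv_mul_vmv, vmv_mul_vmv,
        dps, dps, dps, dps, if_neg (h10 t t), if_pos rfl, if_pos rfl, if_neg (h01 t t)]
      simp only [zero_smul, one_smul, zero_sub, neg_sub_neg]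
      abel
    · intro u _ hu
      rw [sub_mul, mul_sub, mul_sub, vmv_mul_vmv, vmv_mul_vmv, vmv_mul_vmv, vmv_mul_vmv,
        dps, dps, dps, dps, if_neg (h10 t u), if_neg (h11 t u fun e => hu e.symm),
        if_neg (h00 t u fun e => hu e.symm), if_neg (h01 t u)]
      simp
  rw [Finset.sum_congr rfl (fun t _ => hterm t), Finset.sum_neg_distrib,
    sum_pair (fun i => vecMulVec (Pi.single i (1:ℤ)) (Pi.single i 1)), sum_single_outer]

lemma Om_transpose {g : ℕ} : (Om g)ᵀ = - Om g := by
  simp only [Om, Matrix.transpose_sum, Matrix.transpose_sub, vmv_transpose,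
    ← Finset.sum_neg_distrib, neg_sub]

/-! ### The key computation -/

open scoped commutatorElement in
lemma hh_psi_rel {g : ℕ} (Ψ : FreeGroup (Fin (2 * g)) →* FreeGroup (Fin (2 * g)))
    (P : Matrix (Fin (2 * g)) (Fin (2 * g)) ℤ)
    (hP : ∀ w, ab (Ψ w) = P *ᵥ ab w) :
    hh g (Ψ (surfaceRel g)) = ⟨0, P * Om g * Pᵀ⟩ := by
  have hgen : ∀ i : Fin (2 * g), (hh g (Ψ (FreeGroup.of i))).v = P *ᵥ Pi.single i 1 := by
    intro i; rw [hh_v, hP, ab_of]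
  have hc : ∀ t : Fin g,
      hh g (Ψ ⁅FreeGroup.of (sg0 t), FreeGroup.of (sg1 t)⁆)
        = (⟨0, vecMulVec (P *ᵥ Pi.single (sg0 t) 1) (P *ᵥ Pi.single (sg1 t) 1)
            - vecMulVec (P *ᵥ Pi.single (sg1 t) 1) (P *ᵥ Pi.single (sg0 t) 1)⟩ : Heis g) := by
    intro t
    rw [map_commutatorElement, map_commutatorElement, Heis.commutator_eq, hgen, hgen]
  rw [surfaceRel, map_list_prod, map_list_prod, List.map_ofFn, List.map_ofFn]
  have hfun : (⇑(hh g) ∘ ⇑Ψ ∘ (fun i : Fin g =>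
      ⁅FreeGroup.of (⟨2 * i, by omega⟩ : Fin (2 * g)),
       FreeGroup.of (⟨2 * i + 1, by omega⟩ : Fin (2 * g))⁆))
      = fun t => (⟨0, vecMulVec (P *ᵥ Pi.single (sg0 t) 1) (P *ᵥ Pi.single (sg1 t) 1)
            - vecMulVec (P *ᵥ Pi.single (sg1 t) 1) (P *ᵥ Pi.single (sg0 t) 1)⟩ : Heis g) := by
    funext t
    exact hc t
  rw [hfun]
  have h2 := Heis.prod_central_list (g := g) (List.ofFn (fun t : Fin g =>
    vecMulVec (P *ᵥ Pi.single (sg0 t) 1) (P *ᵥ Pi.single (sg1 t) 1)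
      - vecMulVec (P *ᵥ Pi.single (sg1 t) 1) (P *ᵥ Pi.single (sg0 t) 1)))
  rw [List.map_ofFn, Function.comp_def] at h2
  rw [h2, List.sum_ofFn]
  congr 1
  rw [Om, Matrix.mul_sum, Matrix.sum_mul]
  apply Finset.sum_congr rfl
  intro t _
  rw [Matrix.mul_sub, Matrix.sub_mul, conj_vmv, conj_vmv]

/-! ### Rank argument -/

lemma rank_argument {g k : ℕ} (A : Matrix (Fin k) (Fin (2 * g)) ℤ)
    (S : Matrix (Fin (2 * g)) (Fin k) ℤ) (hAS : A * S = 1)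
    (hB : A * Om g * Aᵀ = 0) : k ≤ g := by
  classical
  have cast1 : ((1 : Matrix (Fin k) (Fin k) ℤ).map (Int.castRingHom ℚ : ℤ → ℚ))
      = (1 : Matrix (Fin k) (Fin k) ℚ) := by
    ext i j
    simp [Matrix.map_apply, Matrix.one_apply, apply_ite (Int.castRingHom ℚ : ℤ → ℚ)]
  set Aq : Matrix (Fin k) (Fin (2 * g)) ℚ := A.map (Int.castRingHom ℚ) with hAq
  set Sq : Matrix (Fin (2 * g)) (Fin k) ℚ := S.map (Int.castRingHom ℚ) with hSq
  set Oq : Matrix (Fin (2 * g)) (Fin (2 * g)) ℚ := (Om g).map (Int.castRingHom ℚ) with hOq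
  have hASq : Aq * Sq = 1 := by
    rw [hAq, hSq, ← Matrix.map_mul, hAS, cast1]
  have hOO : Oq * Oq = -1 := by
    rw [hOq, ← Matrix.map_mul, Om_mul_Om]
    ext i j
    simp [Matrix.map_apply, Matrix.one_apply, apply_ite (Int.castRingHom ℚ : ℤ → ℚ)]
  have hBq : Aq * Oq * Aqᵀ = 0 := by
    rw [hAq, hOq, ← Matrix.transpose_map, ← Matrix.map_mul, ← Matrix.map_mul, hB]
    ext i j
    simp [Matrix.map_apply]
  have hdet : IsUnit Oq.det := by
    apply IsUnit.of_mul_eq_one Oq.det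
    rw [← Matrix.det_mul, hOO]
    have : (-1 : Matrix (Fin (2 * g)) (Fin (2 * g)) ℚ) = -(1 : Matrix _ _ ℚ) := by simp
    rw [this, Matrix.det_neg, Matrix.det_one, Fintype.card_fin, pow_mul]
    norm_num
  have hrankA : Aq.rank = k := by
    apply le_antisymm
    · simpa using Matrix.rank_le_card_height Aq
    · have h1 : (Aq * Sq).rank ≤ Aq.rank := Matrix.rank_mul_le_left Aq Sq
      rwa [hASq, Matrix.rank_one, Fintype.card_fin] at h1
  have hrankC : (Aq * Oq).rank = k := by
    rw [Matrix.rank_mul_eq_left_of_isUnit_det Oq Aq hdet, hrankA]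
  have hzero : Aq * (Aq * Oq)ᵀ = 0 := by
    have := congrArg Matrix.transpose hBq
    rwa [Matrix.transpose_mul, Matrix.transpose_transpose, Matrix.transpose_zero] at this
  have hrange : LinearMap.range (Matrix.mulVecLin (Aq * Oq)ᵀ)
      ≤ LinearMap.ker (Matrix.mulVecLin Aq) := by
    rw [LinearMap.range_le_ker_iff, ← Matrix.mulVecLin_mul, hzero]
    exact Matrix.mulVecLin_zero
  have hker : k ≤ Module.finrank ℚ (LinearMap.ker (Matrix.mulVecLin Aq)) := by
    have h1 : ((Aq * Oq)ᵀ).rank ≤ Module.finrank ℚ (LinearMap.ker (Matrix.mulVecLin Aq)) := by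
      rw [Matrix.rank]
      exact Submodule.finrank_mono hrange
    rwa [Matrix.rank_transpose, hrankC] at h1
  have hrn := LinearMap.finrank_range_add_finrank_ker (Matrix.mulVecLin Aq)
  have hdom : Module.finrank ℚ (Fin (2 * g) → ℚ) = 2 * g := by
    simp [Module.finrank_pi]
  rw [hdom] at hrn
  have hrange_eq : Module.finrank ℚ (LinearMap.range (Matrix.mulVecLin Aq)) = k := hrankA
  omega

end CorankAux

open Matrix CorankAux in
lemma exists_AS (g k : ℕ) (φ : SurfaceGroup g →* FreeGroup (Fin k))
    (hφ : Function.Surjective φ) :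
    ∃ (A : Matrix (Fin k) (Fin (2 * g)) ℤ) (S : Matrix (Fin (2 * g)) (Fin k) ℤ),
      A * S = 1 ∧ A * Om g * Aᵀ = 0 := by
  classical
  let mk' : FreeGroup (Fin (2 * g)) →* SurfaceGroup g :=
    PresentedGroup.mk ({surfaceRel g} : Set (FreeGroup (Fin (2 * g))))
  have hrel1 : mk' (surfaceRel g) = 1 := by
    have hmem : surfaceRel g ∈ Subgroup.normalClosure ({surfaceRel g} : Set _) :=
      Subgroup.subset_normalClosure (Set.mem_singleton _)
    exact (QuotientGroup.eq_one_iff _).mpr hmem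
  have hsur : Function.Surjective (⇑φ ∘ ⇑mk') :=
    hφ.comp (PresentedGroup.mk_surjective _)
  choose σ hσ using fun i : Fin k => hsur (FreeGroup.of i)
  simp only [Function.comp_apply] at hσ
  let shom : FreeGroup (Fin k) →* FreeGroup (Fin (2 * g)) := FreeGroup.lift σ
  let A : Matrix (Fin k) (Fin (2 * g)) ℤ := fun i j => ab (φ (mk' (FreeGroup.of j))) i
  let S : Matrix (Fin (2 * g)) (Fin k) ℤ := fun j i => ab (σ i) j
  have habA : ∀ w, ab ((φ.comp mk') w) = A *ᵥ ab w :=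
    ab_eq_mulVec (φ.comp mk') A (fun j => by rw [Matrix.mulVec_single_one]; rfl)
  have habS : ∀ u, ab (shom u) = S *ᵥ ab u :=
    ab_eq_mulVec shom S (fun i => by
      rw [Matrix.mulVec_single_one]
      funext j
      show ab (FreeGroup.lift σ (FreeGroup.of i)) j = ab (σ i) j
      rw [FreeGroup.lift_apply_of])
  have hAS : A * S = 1 := by
    ext i i'
    rw [Matrix.mul_apply, Matrix.one_apply]
    have h := habA (σ i')
    simp only [MonoidHom.comp_apply] at h
    rw [hσ i', ab_of] at h
    have h2 := congrFun h.symm i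
    rw [Pi.single_apply] at h2
    exact h2
  refine ⟨A, S, hAS, ?_⟩
  let Ψ : FreeGroup (Fin (2 * g)) →* FreeGroup (Fin (2 * g)) := shom.comp (φ.comp mk')
  have hPsi1 : Ψ (surfaceRel g) = 1 := by
    show shom (φ (mk' (surfaceRel g))) = 1
    rw [hrel1, _root_.map_one, _root_.map_one]
  have hP : ∀ w, ab (Ψ w) = (S * A) *ᵥ ab w := by
    intro w
    rw [← Matrix.mulVec_mulVec]
    show ab (shom ((φ.comp mk') w)) = S *ᵥ (A *ᵥ ab w)
    rw [habS, habA]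
  have h2 := hh_psi_rel Ψ (S * A) hP
  rw [hPsi1, _root_.map_one] at h2
  have h3 : (S * A) * Om g * (S * A)ᵀ = 0 := (congrArg Heis.m h2).symm
  calc A * Om g * Aᵀ
      = (A * S) * (A * Om g * Aᵀ) * (A * S)ᵀ := by
        rw [hAS, Matrix.transpose_one, Matrix.one_mul, Matrix.mul_one]
    _ = A * ((S * A) * Om g * (S * A)ᵀ) * Aᵀ := by
        simp only [Matrix.transpose_mul, Matrix.mul_assoc]
    _ = 0 := by rw [h3, Matrix.mul_zero, Matrix.zero_mul]

theorem corank_surface_group_le (g k : ℕ) (hg : 1 ≤ g)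
    (φ : SurfaceGroup g →* FreeGroup (Fin k)) (hφ : Function.Surjective φ) :
    k ≤ g := by
  obtain ⟨A, S, hAS, hB⟩ := exists_AS g k φ hφ
  exact CorankAux.rank_argument A S hAS hB
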